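/- arXiv:2309.10879 — 4 statements merged into one kernel-verified Lean document; each statement's English description precedes it below -/
import Mathlib

section
/- Let 𝔉₁, 𝔉₂ be filters on TP[0,1] and let f : [0,1] → ℝ be a bounded function. If S(f,Π,T) converges to I along 𝔉₁ and 𝔉₂ ρ-dominates 𝔉₁, then S(f,Π,T) converges to I along 𝔉₂. -/
open Filter Topology

/-- A tagged partition of the segment `[a, b]`:
points `a = ξ₀ ≤ ξ₁ ≤ ... ≤ ξₙ = b` together with tags `tₖ ∈ [ξₖ₋₁, ξₖ]`. -/
structure TaggedPartition (a b : ℝ) where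
  n : ℕ
  pts : Fin (n + 1) → ℝ
  mono : Monotone pts
  first : pts 0 = a
  last : pts (Fin.last n) = b
  tag : Fin n → ℝ
  tag_ge : ∀ k : Fin n, pts k.castSucc ≤ tag k
  tag_le : ∀ k : Fin n, tag k ≤ pts k.succ

namespace TaggedPartition

variable {a b : ℝ}

/-- Length `Δₖ = ξₖ - ξₖ₋₁` of the `k`-th subinterval. -/
def len (P : TaggedPartition a b) (k : Fin P.n) : ℝ :=
  P.pts k.succ - P.pts k.castSucc

/-- Riemann sum `S(f, Π, T) = Σₖ f(tₖ)·Δₖ`. -/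
def RS (f : ℝ → ℝ) (P : TaggedPartition a b) : ℝ :=
  ∑ k, f (P.tag k) * P.len k

/-- `d(Π) < δ`: every subinterval has length `< δ`. -/
def diamLT (P : TaggedPartition a b) (δ : ℝ) : Prop :=
  ∀ k : Fin P.n, P.len k < δ

/-- `ℓ(Π, T, τ)`: total length of the subintervals whose tag is `τ`
(`0` if `τ` is not a tag). -/
noncomputable def tagLen (P : TaggedPartition a b) (τ : ℝ) : ℝ :=
  ∑ k ∈ Finset.univ.filter (fun k => P.tag k = τ), P.len k

/-- The (finite) set of tags of a tagged partition. -/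
noncomputable def tagSet (P : TaggedPartition a b) : Finset ℝ :=
  Finset.image P.tag Finset.univ

/-- The distance
`ρ((Π₁,T₁),(Π₂,T₂)) = Σ_{t∈T₁∩T₂}|Δ₁(t)−Δ₂(t)| + Σ_{t∈T₁∖T₂}Δ₁(t) + Σ_{t∈T₂∖T₁}Δ₂(t)`. -/
noncomputable def ρ (P Q : TaggedPartition a b) : ℝ :=
  ∑ τ ∈ P.tagSet ∩ Q.tagSet, |P.tagLen τ - Q.tagLen τ|
    + ∑ τ ∈ P.tagSet \ Q.tagSet, P.tagLen τ
    + ∑ τ ∈ Q.tagSet \ P.tagSet, Q.tagLen τ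

end TaggedPartition

/-- Tagged partitions of `[0,1]`. -/
abbrev TP01 := TaggedPartition 0 1

/-- The filter `𝔉_{<δ}` on `TP[0,1]` generated by the base
`P_{<δ} = {(Π,T) : d(Π) < δ}`, `δ > 0`; convergence of Riemann sums along it
is Riemann integrability. -/
noncomputable def riemannFilter : Filter TP01 :=
  ⨅ δ ∈ Set.Ioi (0 : ℝ), Filter.principal {P : TP01 | P.diamLT δ}

/-- `𝔉₂` ρ-dominates `𝔉₁`. -/
def RhoDominates (F₂ F₁ : Filter TP01) : Prop :=
  ∀ ε > (0:ℝ), ∀ A₁ ∈ F₁, ∃ A₂ ∈ F₂, ∀ Q ∈ A₂, ∃ P ∈ A₁, TaggedPartition.ρ P Q < ε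

namespace TaggedPartition

variable {a b : ℝ}

lemma len_nonneg (P : TaggedPartition a b) (k : Fin P.n) : 0 ≤ P.len k :=
  sub_nonneg.2 (P.mono (Fin.castSucc_le_succ k))

lemma tagLen_nonneg (P : TaggedPartition a b) (τ : ℝ) : 0 ≤ P.tagLen τ :=
  Finset.sum_nonneg fun k _ => P.len_nonneg k

lemma tagLen_eq_zero (P : TaggedPartition a b) {τ : ℝ} (h : τ ∉ P.tagSet) :
    P.tagLen τ = 0 := by
  unfold tagLen
  rw [Finset.filter_false_of_mem, Finset.sum_empty]
  intro k _ hk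
  exact h (hk ▸ Finset.mem_image_of_mem P.tag (Finset.mem_univ k))

lemma tag_mem (P : TaggedPartition a b) (k : Fin P.n) : P.tag k ∈ Set.Icc a b := by
  constructor
  · calc a = P.pts 0 := P.first.symm
      _ ≤ P.pts k.castSucc := P.mono (Fin.zero_le _)
      _ ≤ P.tag k := P.tag_ge k
  · calc P.tag k ≤ P.pts k.succ := P.tag_le k
      _ ≤ P.pts (Fin.last P.n) := P.mono (Fin.le_last _)
      _ = b := P.last

lemma RS_eq (f : ℝ → ℝ) (P : TaggedPartition a b) :
    P.RS f = ∑ τ ∈ P.tagSet, f τ * P.tagLen τ := by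
  rw [RS, tagSet, ← Finset.sum_fiberwise_of_maps_to (g := P.tag)
    (fun k _ => Finset.mem_image_of_mem _ (Finset.mem_univ k))]
  refine Finset.sum_congr rfl fun τ _ => ?_
  rw [tagLen, Finset.mul_sum]
  refine Finset.sum_congr rfl fun k hk => ?_
  rw [(Finset.mem_filter.1 hk).2]

lemma abs_RS_sub_le (f : ℝ → ℝ) {C : ℝ} (hb : ∀ t ∈ Set.Icc a b, |f t| ≤ C)
    (P Q : TaggedPartition a b) :
    |P.RS f - Q.RS f| ≤ C * ρ P Q := by
  set U := P.tagSet ∪ Q.tagSet with hU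
  have hP : P.RS f = ∑ τ ∈ U, f τ * P.tagLen τ := by
    rw [RS_eq]
    exact Finset.sum_subset Finset.subset_union_left
      (fun τ _ hτ => by rw [P.tagLen_eq_zero hτ, mul_zero])
  have hQ : Q.RS f = ∑ τ ∈ U, f τ * Q.tagLen τ := by
    rw [RS_eq]
    exact Finset.sum_subset Finset.subset_union_right
      (fun τ _ hτ => by rw [Q.tagLen_eq_zero hτ, mul_zero])
  have hmem : ∀ τ ∈ U, τ ∈ Set.Icc a b := by
    intro τ hτ
    rcases Finset.mem_union.1 hτ with h | h <;>
      · obtain ⟨k, _, rfl⟩ := Finset.mem_image.1 h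
        first
        | exact P.tag_mem k
        | exact Q.tag_mem k
  have key : |P.RS f - Q.RS f| ≤ ∑ τ ∈ U, C * |P.tagLen τ - Q.tagLen τ| := by
    rw [hP, hQ, ← Finset.sum_sub_distrib]
    refine le_trans (Finset.abs_sum_le_sum_abs _ _) (Finset.sum_le_sum fun τ hτ => ?_)
    rw [← mul_sub, abs_mul]
    exact mul_le_mul_of_nonneg_right (hb τ (hmem τ hτ)) (abs_nonneg _)
  have hab : a ≤ b := by
    have := P.mono (Fin.zero_le (Fin.last P.n))
    rwa [P.first, P.last] at this
  have hCnn : 0 ≤ C := le_trans (abs_nonneg _) (hb a (Set.left_mem_Icc.2 hab))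
  have hsplit : U = (P.tagSet ∩ Q.tagSet) ∪ ((P.tagSet \ Q.tagSet) ∪ (Q.tagSet \ P.tagSet)) := by
    ext τ
    simp only [hU, Finset.mem_union, Finset.mem_inter, Finset.mem_sdiff]
    tauto
  have hd1 : Disjoint (P.tagSet ∩ Q.tagSet) ((P.tagSet \ Q.tagSet) ∪ (Q.tagSet \ P.tagSet)) := by
    rw [Finset.disjoint_union_right]
    refine ⟨Finset.disjoint_left.2 fun τ h1 h2 => ?_, Finset.disjoint_left.2 fun τ h1 h2 => ?_⟩
    · exact (Finset.mem_sdiff.1 h2).2 (Finset.mem_inter.1 h1).2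
    · exact (Finset.mem_sdiff.1 h2).2 (Finset.mem_inter.1 h1).1
  have hd2 : Disjoint (P.tagSet \ Q.tagSet) (Q.tagSet \ P.tagSet) := by
    rw [Finset.disjoint_left]; intro τ h1 h2
    simp only [Finset.mem_sdiff] at h1 h2; tauto
  have hsum : ∑ τ ∈ U, |P.tagLen τ - Q.tagLen τ| = ρ P Q := by
    rw [hsplit, Finset.sum_union hd1, Finset.sum_union hd2, ρ, add_assoc]
    congr 1
    congr 1
    · refine Finset.sum_congr rfl fun τ hτ => ?_
      rw [Q.tagLen_eq_zero (Finset.mem_sdiff.1 hτ).2, sub_zero,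
        abs_of_nonneg (P.tagLen_nonneg τ)]
    · refine Finset.sum_congr rfl fun τ hτ => ?_
      rw [P.tagLen_eq_zero (Finset.mem_sdiff.1 hτ).2, zero_sub, abs_neg,
        abs_of_nonneg (Q.tagLen_nonneg τ)]
  calc |P.RS f - Q.RS f| ≤ ∑ τ ∈ U, C * |P.tagLen τ - Q.tagLen τ| := key
    _ = C * ∑ τ ∈ U, |P.tagLen τ - Q.tagLen τ| := by rw [Finset.mul_sum]
    _ = C * ρ P Q := by rw [hsum]

end TaggedPartition

/-- For a bounded `f`, convergence of Riemann sums along `𝔉₁` transfers to any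
filter `𝔉₂` that ρ-dominates `𝔉₁`, with the same limit. -/
theorem tendsto_of_rho_dominates (f : ℝ → ℝ) (F₁ F₂ : Filter TP01) (C : ℝ)
    (hb : ∀ t ∈ Set.Icc (0:ℝ) 1, |f t| ≤ C) (I : ℝ)
    (hI : Filter.Tendsto (fun P : TP01 => TaggedPartition.RS f P) F₁ (nhds I))
    (hdom : RhoDominates F₂ F₁) :
    Filter.Tendsto (fun P : TP01 => TaggedPartition.RS f P) F₂ (nhds I) := by
  have hC : 0 ≤ C := le_trans (abs_nonneg _) (hb 0 (by norm_num))
  rw [Metric.tendsto_nhds]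
  intro ε hε
  have hA₁ : (fun P : TP01 => TaggedPartition.RS f P) ⁻¹' Metric.ball I (ε/2) ∈ F₁ :=
    hI (Metric.ball_mem_nhds I (by positivity))
  obtain ⟨A₂, hA₂, h⟩ := hdom (ε / (2 * (C + 1))) (by positivity) _ hA₁
  filter_upwards [hA₂] with Q hQ
  obtain ⟨P, hP, hρ⟩ := h Q hQ
  have hest : |P.RS f - Q.RS f| ≤ C * TaggedPartition.ρ P Q :=
    TaggedPartition.abs_RS_sub_le f hb P Q
  have hPI : |P.RS f - I| < ε / 2 := by
    simpa [Metric.mem_ball, Real.dist_eq] using hP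
  have h1 : C * TaggedPartition.ρ P Q ≤ C * (ε / (2 * (C + 1))) :=
    mul_le_mul_of_nonneg_left hρ.le hC
  have h2 : C * (ε / (2 * (C + 1))) < ε / 2 := by
    rw [mul_comm, div_mul_eq_mul_div, div_lt_div_iff₀ (by positivity) (by norm_num : (0:ℝ) < 2)]
    nlinarith
  have : |Q.RS f - I| < ε := by
    have := abs_sub_abs_le_abs_sub (P.RS f - I) (P.RS f - Q.RS f)
    have htri : |Q.RS f - I| ≤ |P.RS f - Q.RS f| + |P.RS f - I| := by
      have := abs_sub (Q.RS f) I
      calc |Q.RS f - I| = |(P.RS f - I) - (P.RS f - Q.RS f)| := by ring_nf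
        _ ≤ |P.RS f - I| + |P.RS f - Q.RS f| := abs_sub _ _
        _ = |P.RS f - Q.RS f| + |P.RS f - I| := by ring
    linarith
  simpa [Real.dist_eq] using this
end

section
/- If a filter 𝔉 on TP[0,1] is exactly tagged, then there exists an unbounded function f : [0,1] → ℝ that is 𝔉-integrable. -/
open Filter Topology

/-- A filter `𝔉` on `TP[0,1]` is exactly tagged if it has a base `𝔅` and there is a
strictly decreasing sequence `A ⊂ [0,1]` such that every tagged partition in every
member of `𝔅` has tags disjoint from `A`. -/
def ExactlyTagged (F : Filter TP01) : Prop :=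
  ∃ (B : FilterBasis TP01) (a : ℕ → ℝ), B.filter = F ∧ StrictAnti a ∧
    (∀ n, a n ∈ Set.Icc (0:ℝ) 1) ∧
    ∀ S ∈ B.sets, ∀ P ∈ S, ∀ k : Fin P.n, ∀ n : ℕ, P.tag k ≠ a n

/-- If `𝔉` is exactly tagged, then some unbounded function is `𝔉`-integrable. -/
theorem exactly_tagged_integrates_unbounded (F : Filter TP01)
    (h : ExactlyTagged F) :
    ∃ f : ℝ → ℝ, (∀ C : ℝ, ∃ t ∈ Set.Icc (0:ℝ) 1, C < |f t|) ∧
      ∃ I : ℝ, Filter.Tendsto (fun P : TP01 => TaggedPartition.RS f P) F (nhds I) := by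

  obtain ⟨B, a, hBF, hanti, hmem, htags⟩ := h
  classical
  set f : ℝ → ℝ := fun t => if h : ∃ n : ℕ, a n = t then (h.choose : ℝ) + 1 else 0 with hf
  refine ⟨f, ?_, 0, ?_⟩
  · intro C
    obtain ⟨n, hn⟩ := exists_nat_gt C
    refine ⟨a n, hmem n, ?_⟩
    have hex : ∃ m : ℕ, a m = a n := ⟨n, rfl⟩
    have : f (a n) = (hex.choose : ℝ) + 1 := by simp [hf, hex]
    have hchoose : hex.choose = n := hanti.injective hex.choose_spec
    rw [this, hchoose]
    have : (n : ℝ) + 1 > C := lt_trans hn (by linarith)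
    calc C < (n:ℝ) + 1 := this
      _ ≤ |(n:ℝ) + 1| := le_abs_self _
  · obtain ⟨S, hS⟩ := B.nonempty
    have hSF : S ∈ F := hBF ▸ B.mem_filter_of_mem hS
    have hzero : ∀ P ∈ S, TaggedPartition.RS f P = 0 := by
      intro P hP
      unfold TaggedPartition.RS
      apply Finset.sum_eq_zero
      intro k _
      have hne : ¬ ∃ n : ℕ, a n = P.tag k := by
        rintro ⟨n, hn⟩
        exact htags S hS P hP k n hn.symm
      simp [hf, hne]
    have : Filter.Tendsto (fun _ : TP01 => (0:ℝ)) F (nhds 0) := tendsto_const_nhds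
    refine this.congr' ?_
    filter_upwards [hSF] with P hP
    exact (hzero P hP).symm
end

section
/- Let 𝔉 be a filter on TP[0,1]. The following are equivalent: (1) there exists an unbounded function f : [0,1] → [0,∞) such that (Π,T) ↦ S(f,Π,T) is 𝔉-bounded; (2) there exists a countable subset {tₙ}ₙ∈ℕ of [0,1] and a set A ∈ 𝔉 such that Σₙ n·ℓ(Π,T,tₙ) < 1 for every (Π,T) ∈ A. -/
open Filter Topology

section Aux

variable {a b : ℝ}

lemma aux_len_nonneg (P : TaggedPartition a b) (k : Fin P.n) : 0 ≤ P.len k :=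
  sub_nonneg.2 (P.mono (Fin.castSucc_le_succ k))

lemma aux_tagLen_nonneg (P : TaggedPartition a b) (τ : ℝ) : 0 ≤ P.tagLen τ :=
  Finset.sum_nonneg fun k _ => aux_len_nonneg P k

lemma aux_tagLen_eq_zero (P : TaggedPartition a b) {τ : ℝ} (h : τ ∉ P.tagSet) :
    P.tagLen τ = 0 := by
  apply Finset.sum_eq_zero
  intro k hk
  exact absurd (by
    simp only [TaggedPartition.tagSet, Finset.mem_image]
    exact ⟨k, Finset.mem_univ k, (Finset.mem_filter.1 hk).2⟩) h

lemma aux_RS_nonneg {f : ℝ → ℝ} (hf : ∀ t, 0 ≤ f t) (P : TaggedPartition a b) :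
    0 ≤ P.RS f :=
  Finset.sum_nonneg fun k _ => mul_nonneg (hf _) (aux_len_nonneg P k)

lemma aux_mul_tagLen_le_RS {f : ℝ → ℝ} (hf : ∀ t, 0 ≤ f t) (P : TaggedPartition a b)
    (τ : ℝ) : f τ * P.tagLen τ ≤ P.RS f := by
  unfold TaggedPartition.RS TaggedPartition.tagLen
  rw [Finset.mul_sum]
  calc ∑ k ∈ Finset.univ.filter (fun k => P.tag k = τ), f τ * P.len k
      = ∑ k ∈ Finset.univ.filter (fun k => P.tag k = τ), f (P.tag k) * P.len k := by
        refine Finset.sum_congr rfl fun k hk => ?_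
        rw [(Finset.mem_filter.1 hk).2]
    _ ≤ ∑ k, f (P.tag k) * P.len k :=
        Finset.sum_le_sum_of_subset_of_nonneg (Finset.filter_subset _ _)
          (fun k _ _ => mul_nonneg (hf _) (aux_len_nonneg P k))

lemma aux_RS_eq_sum_tagSet (f : ℝ → ℝ) (P : TaggedPartition a b) :
    P.RS f = ∑ τ ∈ P.tagSet, f τ * P.tagLen τ := by
  unfold TaggedPartition.RS TaggedPartition.tagSet TaggedPartition.tagLen
  rw [← Finset.sum_fiberwise_of_maps_to (g := P.tag)
      (t := Finset.image P.tag Finset.univ)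
      (fun k _ => Finset.mem_image_of_mem _ (Finset.mem_univ k))
      (fun k => f (P.tag k) * P.len k)]
  refine Finset.sum_congr rfl fun τ _ => ?_
  rw [Finset.mul_sum]
  refine Finset.sum_congr rfl fun k hk => ?_
  rw [(Finset.mem_filter.1 hk).2]

lemma aux_summable_bound : Summable (fun n : ℕ => ((1:ℝ)/2) ^ (n + 2)) := by
  have h : Summable (fun n : ℕ => ((1:ℝ)/2) ^ n) :=
    summable_geometric_of_lt_one (by norm_num) (by norm_num)
  refine (h.mul_right (((1:ℝ)/2) ^ 2)).congr fun n => ?_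
  rw [← pow_add]

lemma aux_tsum_bound : (∑' n : ℕ, ((1:ℝ)/2) ^ (n + 2)) = 1/2 := by
  have h : ∀ n : ℕ, ((1:ℝ)/2) ^ (n + 2) = ((1:ℝ)/2) ^ n * ((1:ℝ)/2) ^ 2 :=
    fun n => pow_add _ _ _
  rw [tsum_congr h, tsum_mul_right, tsum_geometric_of_lt_one (by norm_num : (0:ℝ) ≤ 1/2)
    (by norm_num : (1:ℝ)/2 < 1)]
  norm_num

end Aux

/-- For a filter `𝔉` on `TP[0,1]`, there exists an unbounded nonnegative function whose
Riemann sums are `𝔉`-bounded iff there is a countable set `{tₙ} ⊂ [0,1]` and `A ∈ 𝔉`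
with `Σₙ n·ℓ(Π,T,tₙ) < 1` for all `(Π,T) ∈ A`. -/
theorem unbounded_with_bounded_sums_iff (F : Filter TP01) :
    (∃ f : ℝ → ℝ, (∀ t, 0 ≤ f t) ∧ (∀ C : ℝ, ∃ t ∈ Set.Icc (0:ℝ) 1, C < f t) ∧
      ∃ C > (0:ℝ), ∃ A ∈ F, ∀ P ∈ A, |TaggedPartition.RS f P| < C) ↔
    (∃ t : ℕ → ℝ, Function.Injective t ∧ (∀ n, t n ∈ Set.Icc (0:ℝ) 1) ∧
      ∃ A ∈ F, ∀ P ∈ A, (∑' n : ℕ, (n:ℝ) * TaggedPartition.tagLen P (t n)) < 1) := by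
  classical
  constructor
  · rintro ⟨f, hf0, hfU, C, hC, A, hA, hbd⟩
    set B : ℕ → ℝ := fun n => 2 * C * n * 2 ^ (n + 1) with hB
    let t : ℕ → ℝ := fun n => Nat.rec (Classical.choose (hfU (B 0)))
      (fun n tn => Classical.choose (hfU (max (f tn) (B (n + 1))))) n
    have hmem : ∀ n, t n ∈ Set.Icc (0:ℝ) 1 := by
      intro n
      cases n with
      | zero => exact (Classical.choose_spec (hfU (B 0))).1
      | succ n => exact (Classical.choose_spec (hfU (max (f (t n)) (B (n + 1))))).1
    have hgt : ∀ n, B n < f (t n) := by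
      intro n
      cases n with
      | zero => exact (Classical.choose_spec (hfU (B 0))).2
      | succ n =>
        exact lt_of_le_of_lt (le_max_right _ _)
          (Classical.choose_spec (hfU (max (f (t n)) (B (n + 1))))).2
    have hmono : StrictMono (fun n => f (t n)) := by
      apply strictMono_nat_of_lt_succ
      intro n
      exact lt_of_le_of_lt (le_max_left _ _)
        (Classical.choose_spec (hfU (max (f (t n)) (B (n + 1))))).2
    have hinj : Function.Injective t := fun m n h =>
      hmono.injective (congrArg f h)
    refine ⟨t, hinj, hmem, A, hA, ?_⟩
    intro P hP
    have key : ∀ n : ℕ, (n:ℝ) * P.tagLen (t n) ≤ ((1:ℝ)/2) ^ (n + 2) := by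
      intro n
      set L : ℝ := P.tagLen (t n) with hLdef
      have hL : 0 ≤ L := aux_tagLen_nonneg P (t n)
      have h1 : f (t n) * L ≤ P.RS f := aux_mul_tagLen_le_RS hf0 P (t n)
      have h2 : P.RS f < C := lt_of_le_of_lt (le_abs_self _) (hbd P hP)
      have h3 : B n * L ≤ f (t n) * L := mul_le_mul_of_nonneg_right (hgt n).le hL
      set p : ℝ := 2 ^ (n + 1) with hp
      have hppos : (0:ℝ) < p := by positivity
      have h4 : C * (2 * p * ((n:ℝ) * L)) < C * 1 := by
        have : C * (2 * p * ((n:ℝ) * L)) = B n * L := by rw [hB, hp]; ring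
        rw [this, mul_one]
        exact lt_of_le_of_lt h3 (lt_of_le_of_lt h1 h2)
      have h5 : 2 * p * ((n:ℝ) * L) < 1 := lt_of_mul_lt_mul_left h4 hC.le
      have hhalf : ((1:ℝ)/2) ^ (n + 2) = 1 / (2 * p) := by
        rw [hp, div_pow, one_pow, pow_succ]
        ring_nf
      rw [hhalf, le_div_iff₀ (by positivity : (0:ℝ) < 2 * p)]
      nlinarith [h5]
    have hnonneg : ∀ n : ℕ, 0 ≤ (n:ℝ) * P.tagLen (t n) :=
      fun n => mul_nonneg (Nat.cast_nonneg n) (aux_tagLen_nonneg P (t n))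
    have hsum : Summable (fun n : ℕ => (n:ℝ) * P.tagLen (t n)) :=
      Summable.of_nonneg_of_le hnonneg key aux_summable_bound
    calc (∑' n : ℕ, (n:ℝ) * P.tagLen (t n))
        ≤ ∑' n : ℕ, ((1:ℝ)/2) ^ (n + 2) := Summable.tsum_le_tsum key hsum aux_summable_bound
      _ = 1/2 := aux_tsum_bound
      _ < 1 := by norm_num
  · rintro ⟨t, hinj, hmem, A, hA, hlt⟩
    set f : ℝ → ℝ := fun x => if h : ∃ n, t n = x then ((h.choose : ℕ) : ℝ) else 0
      with hfdef
    have hft : ∀ n, f (t n) = n := by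
      intro n
      have h : ∃ m, t m = t n := ⟨n, rfl⟩
      have : f (t n) = ((h.choose : ℕ) : ℝ) := by rw [hfdef]; exact dif_pos h
      rw [this]
      exact_mod_cast congrArg Nat.cast (hinj h.choose_spec)
    have hf0 : ∀ x, 0 ≤ f x := by
      intro x
      have hx : f x = if h : ∃ n, t n = x then ((h.choose : ℕ) : ℝ) else 0 := rfl
      rw [hx]
      split
      · exact Nat.cast_nonneg _
      · exact le_rfl
    refine ⟨f, hf0, ?_, 1, one_pos, A, hA, ?_⟩
    · intro C
      obtain ⟨n, hn⟩ := exists_nat_gt C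
      exact ⟨t n, hmem n, by rw [hft n]; exact hn⟩
    · intro P hP
      rw [abs_of_nonneg (aux_RS_nonneg hf0 P)]
      have hinjOn : Set.InjOn t (t ⁻¹' ↑P.tagSet) := fun x _ y _ h => hinj h
      set s : Finset ℕ := P.tagSet.preimage t hinjOn with hs
      have hRSeq : P.RS f = ∑ n ∈ s, (n:ℝ) * P.tagLen (t n) := by
        rw [aux_RS_eq_sum_tagSet, ← Finset.sum_preimage t P.tagSet hinjOn
          (fun τ => f τ * P.tagLen τ) ?_]
        · exact Finset.sum_congr rfl fun n _ => by rw [hft]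
        · intro τ _ hτr
          have hne : ¬ ∃ n, t n = τ := by simpa [Set.range] using hτr
          have h0 : f τ = 0 := dif_neg hne
          show f τ * P.tagLen τ = 0
          rw [h0, zero_mul]
      have hsummable : Summable (fun n : ℕ => (n:ℝ) * P.tagLen (t n)) := by
        apply summable_of_ne_finset_zero (s := s)
        intro n hn
        have : t n ∉ P.tagSet := by
          intro h
          exact hn (by rw [hs]; exact Finset.mem_preimage.2 h)
        rw [aux_tagLen_eq_zero P this, mul_zero]
      calc P.RS f = ∑ n ∈ s, (n:ℝ) * P.tagLen (t n) := hRSeq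
        _ ≤ ∑' n : ℕ, (n:ℝ) * P.tagLen (t n) :=
            Summable.sum_le_tsum s (fun n _ => mul_nonneg (Nat.cast_nonneg n)
              (aux_tagLen_nonneg P (t n))) hsummable
        _ < 1 := hlt P hP
end

section
/- Let 𝔉 be a filter on TP[0,1]. Suppose there exists a countable subset {tₙ}ₙ∈ℕ of [0,1] with pairwise distinct elements and A ∈ 𝔉 such that Σₙ n·ℓ(Π,T,tₙ) < 1 for all (Π,T) ∈ A. Then there exists an unbounded function f : [0,1] → [0,∞) (namely f(tₙ) = n and f = 0 otherwise) such that S(f,Π,T) < 1 for all (Π,T) ∈ A; in particular S(f,·,·) is 𝔉-bounded. -/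
open Filter Topology

/-- (2) ⇒ (1) of Theorem `th`: given distinct points `tₙ ∈ [0,1]` and `A ∈ 𝔉` with
`Σₙ n·ℓ(Π,T,tₙ) < 1` on `A`, the function `f(tₙ) = n`, `f = 0` elsewhere, is
nonnegative, unbounded, and has Riemann sums `< 1` on `A`; in particular they are
`𝔉`-bounded. -/
theorem small_tagLen_sum_implies_bounded_sums (F : Filter TP01) (t : ℕ → ℝ)
    (ht : Function.Injective t) (htm : ∀ n, t n ∈ Set.Icc (0:ℝ) 1)
    (A : Set TP01) (hA : A ∈ F)
    (h : ∀ P ∈ A, (∑' n : ℕ, (n:ℝ) * TaggedPartition.tagLen P (t n)) < 1) :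
    ∃ f : ℝ → ℝ, (∀ n : ℕ, f (t n) = n) ∧ (∀ x, (∀ n, x ≠ t n) → f x = 0) ∧
      (∀ x, 0 ≤ f x) ∧ (∀ C : ℝ, ∃ x ∈ Set.Icc (0:ℝ) 1, C < f x) ∧
      ∀ P ∈ A, TaggedPartition.RS f P < 1 := by

  classical
  set f : ℝ → ℝ := fun x => if h : ∃ n, t n = x then ((h.choose : ℕ) : ℝ) else 0 with hf
  have hfn : ∀ n, f (t n) = n := by
    intro n
    have hex : ∃ m, t m = t n := ⟨n, rfl⟩
    have : hex.choose = n := ht hex.choose_spec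
    simp only [hf, dif_pos hex, this]
  refine ⟨f, hfn, ?_, ?_, ?_, ?_⟩
  · intro x hx
    have : ¬∃ n, t n = x := by rintro ⟨n, hn⟩; exact hx n hn.symm
    simp only [hf, dif_neg this]
  · intro x
    simp only [hf]
    split <;> positivity
  · intro C
    obtain ⟨n, hn⟩ := exists_nat_gt C
    exact ⟨t n, htm n, by rw [hfn]; exact_mod_cast hn⟩
  · intro P hP
    have hlen : ∀ k, 0 ≤ P.len k := fun k =>
      sub_nonneg.2 (P.mono (Fin.castSucc_le_succ k))
    have htagLen : ∀ τ, 0 ≤ P.tagLen τ := fun τ =>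
      Finset.sum_nonneg fun k _ => hlen k
    set m : Fin P.n → ℕ := fun k => if h : ∃ n, t n = P.tag k then h.choose else 0 with hm
    set s : Finset ℕ := Finset.image m Finset.univ with hs
    have key : ∀ n : ℕ, ∑ k ∈ Finset.univ.filter (fun k => m k = n),
        f (P.tag k) * P.len k = (n:ℝ) * P.tagLen (t n) := by
      intro n
      rcases Nat.eq_zero_or_pos n with rfl | hn
      · rw [Finset.sum_eq_zero]
        · simp
        · intro k hk
          simp only [Finset.mem_filter, Finset.mem_univ, true_and, hm] at hk
          by_cases hex : ∃ j, t j = P.tag k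
          · rw [dif_pos hex] at hk
            simp only [hf, dif_pos hex, hk, Nat.cast_zero, zero_mul]
          · simp only [hf, dif_neg hex, zero_mul]
      · have hfilter : Finset.univ.filter (fun k => m k = n)
            = Finset.univ.filter (fun k => P.tag k = t n) := by
          ext k
          simp only [Finset.mem_filter, Finset.mem_univ, true_and, hm]
          constructor
          · intro hk
            by_cases hex : ∃ j, t j = P.tag k
            · rw [dif_pos hex] at hk
              rw [← hex.choose_spec, hk]
            · rw [dif_neg hex] at hk
              omega
          · intro hk
            have hex : ∃ j, t j = P.tag k := ⟨n, hk.symm⟩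
            rw [dif_pos hex]
            exact ht (hex.choose_spec.trans hk)
        rw [hfilter, TaggedPartition.tagLen, Finset.mul_sum]
        refine Finset.sum_congr rfl fun k hk => ?_
        simp only [Finset.mem_filter] at hk
        rw [hk.2, hfn]
    have hRS : P.RS f = ∑ n ∈ s, (n:ℝ) * P.tagLen (t n) := by
      rw [TaggedPartition.RS,
        ← Finset.sum_fiberwise_of_maps_to (g := m) (t := s)
          (fun k _ => Finset.mem_image_of_mem m (Finset.mem_univ k))]
      exact Finset.sum_congr rfl fun n _ => key n
    have hzero : ∀ n ∉ s, (n:ℝ) * P.tagLen (t n) = 0 := by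
      intro n hns
      have : P.tagLen (t n) = 0 := by
        rw [TaggedPartition.tagLen, Finset.sum_eq_zero]
        intro k hk
        simp only [Finset.mem_filter] at hk
        exfalso
        apply hns
        have hex : ∃ j, t j = P.tag k := ⟨n, hk.2.symm⟩
        have : m k = n := by
          simp only [hm, dif_pos hex]
          exact ht (hex.choose_spec.trans hk.2)
        exact this ▸ Finset.mem_image_of_mem m (Finset.mem_univ k)
      rw [this, mul_zero]
    have hsum : Summable (fun n : ℕ => (n:ℝ) * P.tagLen (t n)) :=
      summable_of_ne_finset_zero hzero
    calc P.RS f = ∑ n ∈ s, (n:ℝ) * P.tagLen (t n) := hRS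
      _ ≤ ∑' n : ℕ, (n:ℝ) * P.tagLen (t n) :=
          Summable.sum_le_tsum s (fun n _ => mul_nonneg (Nat.cast_nonneg n) (htagLen _)) hsum
      _ < 1 := h P hP
end
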